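/- In dimension d = 3, suppose ω̂ : (0,1] → [0,∞) is such that r ↦ r² ω̂(r) is non-increasing on (0,1), not identically constant, and r³ω̂(r) is integrable. Then for every a > 0, the quantity ∫₀^{π/2} sin(2φ) ∫₀^1 r² ω̂(r) sin(r cos(φ) a) dr dφ is strictly positive. -/

import Mathlib

open MeasureTheory Real Set

/-- Integral of `sin (c r)` over `Ioo 0 t`. -/
lemma sin_Ioo_integral {c t : ℝ} (hc : c ≠ 0) (ht : 0 ≤ t) :
    ∫ r in Ioo (0:ℝ) t, Real.sin (c * r) = (1 - Real.cos (c * t)) / c := by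
  rw [← integral_Ioc_eq_integral_Ioo, ← intervalIntegral.integral_of_le ht,
    intervalIntegral.integral_comp_mul_left Real.sin hc, mul_zero, integral_sin,
    Real.cos_zero, smul_eq_mul, inv_mul_eq_div]

/-- Integrability of `g r * sin (c r)` on `(0,1)` when `r * g r` is integrable and `g ≥ 0`. -/
lemma aux_integrable (g : ℝ → ℝ) (hg : Measurable g)
    (hgn : ∀ r ∈ Ioo (0:ℝ) 1, 0 ≤ g r)
    (hm : IntegrableOn (fun r => r * g r) (Ioo 0 1)) (c : ℝ) :
    IntegrableOn (fun r => g r * Real.sin (c * r)) (Ioo (0:ℝ) 1) := by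
  have hmeas : Measurable fun r => g r * Real.sin (c * r) :=
    hg.mul (Real.measurable_sin.comp (measurable_id.const_mul c))
  refine Integrable.mono' (hm.const_mul |c|) hmeas.aestronglyMeasurable ?_
  rw [ae_restrict_iff' measurableSet_Ioo]
  filter_upwards with r hr
  have h1 : |Real.sin (c * r)| ≤ |c * r| := Real.abs_sin_le_abs
  have hgr := hgn r hr
  calc ‖g r * Real.sin (c * r)‖ = g r * |Real.sin (c * r)| := by
        rw [norm_mul, Real.norm_eq_abs, Real.norm_eq_abs, abs_of_nonneg hgr]
    _ ≤ g r * |c * r| := mul_le_mul_of_nonneg_left h1 hgr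
    _ = |c| * (r * g r) := by rw [abs_mul, abs_of_nonneg hr.1.le]; ring

/-- Key nonnegativity lemma: for `g` nonnegative and antitone on `(0,1)`,
`∫₀¹ g(r) sin (c r) dr ≥ 0` for `c > 0`. -/
lemma sineA (g : ℝ → ℝ) (hg : Measurable g)
    (hgn : ∀ r ∈ Ioo (0:ℝ) 1, 0 ≤ g r)
    (hmono : AntitoneOn g (Ioo 0 1))
    (hm : IntegrableOn (fun r => r * g r) (Ioo 0 1))
    {c : ℝ} (hc : 0 < c) :
    0 ≤ ∫ r in Ioo (0:ℝ) 1, g r * Real.sin (c * r) := by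
  set μ := volume.restrict (Ioo (0:ℝ) 1) with hμ
  set ν := volume.restrict (Ioi (0:ℝ)) with hν
  set F : ℝ × ℝ → ℝ := fun p => if p.2 < g p.1 then Real.sin (c * p.1) else 0 with hF
  have hFmeas : Measurable F := by
    refine Measurable.ite ?_ (Real.measurable_sin.comp (measurable_fst.const_mul c))
      measurable_const
    exact measurableSet_lt measurable_snd (hg.comp measurable_fst)
  have hsec : ∀ r : ℝ, (fun l => F (r, l)) =
      (Iio (g r)).indicator (fun _ => Real.sin (c * r)) := by
    intro r; funext l; simp [hF, Set.indicator_apply, mem_Iio]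
  have hνIio : ∀ r : ℝ, ν (Iio (g r)) = ENNReal.ofReal (g r) := by
    intro r
    rw [hν, Measure.restrict_apply measurableSet_Iio, Set.Iio_inter_Ioi, Real.volume_Ioo,
      sub_zero]
  have heval : ∀ r : ℝ, 0 ≤ g r → ∫ l, F (r, l) ∂ν = g r * Real.sin (c * r) := by
    intro r hr
    rw [hsec r, integral_indicator_const _ measurableSet_Iio, measureReal_def, hνIio r,
      ENNReal.toReal_ofReal hr, smul_eq_mul]
  have hevalnorm : ∀ r : ℝ, 0 ≤ g r → ∫ l, ‖F (r, l)‖ ∂ν = g r * ‖Real.sin (c * r)‖ := by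
    intro r hr
    have : (fun l => ‖F (r, l)‖) = (Iio (g r)).indicator (fun _ => ‖Real.sin (c * r)‖) := by
      funext l
      rw [show F (r, l) = (Iio (g r)).indicator (fun _ => Real.sin (c * r)) l from
        congrFun (hsec r) l]
      by_cases h : l ∈ Iio (g r) <;> simp [Set.indicator_apply, h]
    rw [this, integral_indicator_const _ measurableSet_Iio, measureReal_def, hνIio r,
      ENNReal.toReal_ofReal hr, smul_eq_mul]
  have hFint : Integrable F (μ.prod ν) := by
    refine (integrable_prod_iff hFmeas.aestronglyMeasurable).2 ⟨?_, ?_⟩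
    · rw [ae_restrict_iff' measurableSet_Ioo]
      filter_upwards with r hr
      rw [hsec r]
      refine (integrable_indicator_iff measurableSet_Iio).2 ?_
      refine integrableOn_const ?_
      rw [hνIio r]
      exact ENNReal.ofReal_ne_top
    · have hcongr : (fun r => ∫ l, ‖F (r, l)‖ ∂ν) =ᵐ[μ]
          fun r => g r * ‖Real.sin (c * r)‖ := by
        rw [hμ, Filter.EventuallyEq, ae_restrict_iff' measurableSet_Ioo]
        filter_upwards with r hr
        exact hevalnorm r (hgn r hr)
      refine Integrable.congr ?_ hcongr.symm
      refine Integrable.congr ((aux_integrable g hg hgn hm c).abs) ?_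
      rw [hμ, Filter.EventuallyEq, ae_restrict_iff' measurableSet_Ioo]
      filter_upwards with r hr
      rw [abs_mul, abs_of_nonneg (hgn r hr), Real.norm_eq_abs]
  have h0 : ∫ r in Ioo (0:ℝ) 1, g r * Real.sin (c * r) = ∫ r, (∫ l, F (r, l) ∂ν) ∂μ := by
    refine (integral_congr_ae ?_).symm
    rw [Filter.EventuallyEq, ae_restrict_iff' measurableSet_Ioo]
    filter_upwards with r hr
    exact heval r (hgn r hr)
  have hswap : ∫ r, (∫ l, F (r, l) ∂ν) ∂μ = ∫ l, (∫ r, F (r, l) ∂μ) ∂ν :=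
    integral_integral_swap hFint
  have hinner : ∀ l : ℝ, 0 ≤ ∫ r, F (r, l) ∂μ := by
    intro l
    have hTmeas : MeasurableSet {r : ℝ | l < g r} := measurableSet_lt measurable_const hg
    have h1 : (fun r => F (r, l)) = Set.indicator {r : ℝ | l < g r}
        (fun r => Real.sin (c * r)) := by
      funext r
      simp [hF, Set.indicator_apply, Set.mem_setOf_eq]
    rw [h1, hμ, setIntegral_indicator hTmeas]
    set S := Ioo (0:ℝ) 1 ∩ {r : ℝ | l < g r} with hS
    set t := sSup (insert (0:ℝ) S) with ht
    have hbdd : BddAbove (insert (0:ℝ) S) := by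
      refine ⟨1, ?_⟩
      rintro x (rfl | hx)
      · norm_num
      · exact hx.1.2.le
    have ht0 : 0 ≤ t := le_csSup hbdd (mem_insert 0 S)
    have hsub1 : Ioo (0:ℝ) t ⊆ S := by
      intro r hr
      obtain ⟨s, hs, hrs⟩ := exists_lt_of_lt_csSup (insert_nonempty 0 S) hr.2
      rcases hs with rfl | hsS
      · exact absurd hrs (not_lt.2 hr.1.le)
      · have hr1 : r ∈ Ioo (0:ℝ) 1 := ⟨hr.1, hrs.trans hsS.1.2⟩
        exact ⟨hr1, lt_of_lt_of_le hsS.2 (hmono hr1 hsS.1 hrs.le)⟩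
    have hsub2 : S ⊆ Ioc 0 t := fun s hs => ⟨hs.1.1, le_csSup hbdd (mem_insert_of_mem _ hs)⟩
    have hae : S =ᵐ[volume] Ioo (0:ℝ) t := by
      rw [MeasureTheory.ae_eq_set]
      constructor
      · refine measure_mono_null (fun s hs => ?_) (measure_singleton t)
        have h2 := hsub2 hs.1
        have h3 : ¬(0 < s ∧ s < t) := fun h => hs.2 ⟨h.1, h.2⟩
        have h4 : s = t := by
          rcases lt_or_eq_of_le h2.2 with h5 | h5
          · exact absurd ⟨h2.1, h5⟩ h3
          · exact h5
        simp [h4]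
      · refine measure_mono_null (fun r hr => ?_) (measure_empty (μ := volume))
        exact absurd (hsub1 hr.1) hr.2
    rw [setIntegral_congr_set hae, sin_Ioo_integral hc.ne' ht0]
    have h6 := Real.cos_le_one (c * t)
    exact div_nonneg (by linarith) hc.le
  rw [h0, hswap]
  exact integral_nonneg hinner

/-- Strict positivity when `0 < c ≤ π`. -/
lemma sineB (g : ℝ → ℝ) (hg : Measurable g)
    (hgn : ∀ r ∈ Ioo (0:ℝ) 1, 0 ≤ g r)
    (hmono : AntitoneOn g (Ioo 0 1))
    (hnc : ¬ ∃ C : ℝ, ∀ r ∈ Ioo (0:ℝ) 1, g r = C)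
    (hm : IntegrableOn (fun r => r * g r) (Ioo 0 1))
    {c : ℝ} (hc : 0 < c) (hcπ : c ≤ π) :
    0 < ∫ r in Ioo (0:ℝ) 1, g r * Real.sin (c * r) := by
  push_neg at hnc
  obtain ⟨r₀, hr₀, hne⟩ := hnc (g (1/2))
  have hhalf : (1/2 : ℝ) ∈ Ioo (0:ℝ) 1 := by norm_num
  obtain ⟨s, hs, hgs⟩ : ∃ s ∈ Ioo (0:ℝ) 1, 0 < g s := by
    rcases lt_or_gt_of_ne hne with h | h
    · exact ⟨1/2, hhalf, (hgn r₀ hr₀).trans_lt h⟩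
    · exact ⟨r₀, hr₀, (hgn _ hhalf).trans_lt h⟩
  have hsin : ∀ r ∈ Ioo (0:ℝ) 1, 0 ≤ Real.sin (c * r) := by
    intro r hr
    refine Real.sin_nonneg_of_nonneg_of_le_pi (mul_nonneg hc.le hr.1.le) ?_
    nlinarith [hr.1, hr.2]
  have hnonnegI : ∀ r ∈ Ioo (0:ℝ) 1, 0 ≤ g r * Real.sin (c * r) := fun r hr =>
    mul_nonneg (hgn r hr) (hsin r hr)
  have hIoosub : Ioo (0:ℝ) s ⊆ Ioo (0:ℝ) 1 := Ioo_subset_Ioo le_rfl hs.2.le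
  have hint1 : IntegrableOn (fun r => g r * Real.sin (c * r)) (Ioo (0:ℝ) s) :=
    (aux_integrable g hg hgn hm c).mono_set hIoosub
  have hcont : Continuous fun r : ℝ => g s * Real.sin (c * r) := by fun_prop
  have hint2 : IntegrableOn (fun r => g s * Real.sin (c * r)) (Ioo (0:ℝ) s) :=
    (hcont.continuousOn.integrableOn_compact isCompact_Icc).mono_set Ioo_subset_Icc_self
  have step1 : ∫ r in Ioo (0:ℝ) s, g s * Real.sin (c * r) ≤
      ∫ r in Ioo (0:ℝ) s, g r * Real.sin (c * r) := by
    refine setIntegral_mono_on hint2 hint1 measurableSet_Ioo ?_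
    intro r hr
    have hr1 : r ∈ Ioo (0:ℝ) 1 := hIoosub hr
    exact mul_le_mul_of_nonneg_right (hmono hr1 hs hr.2.le) (hsin r hr1)
  have step0 : ∫ r in Ioo (0:ℝ) s, g s * Real.sin (c * r) =
      g s * ((1 - Real.cos (c * s)) / c) := by
    rw [integral_const_mul, sin_Ioo_integral hc.ne' hs.1.le]
  have hcos : Real.cos (c * s) < 1 := by
    refine lt_of_le_of_ne (Real.cos_le_one _) ?_
    intro h
    have hπ := Real.pi_pos
    have h2 : c * s = 0 := by
      refine (Real.cos_eq_one_iff_of_lt_of_lt ?_ ?_).1 h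
      · nlinarith [hs.1, hs.2]
      · nlinarith [hs.1, hs.2]
    nlinarith [hs.1]
  have hpos0 : 0 < g s * ((1 - Real.cos (c * s)) / c) :=
    mul_pos hgs (div_pos (by linarith) hc)
  have step2 : ∫ r in Ioo (0:ℝ) s, g r * Real.sin (c * r) ≤
      ∫ r in Ioo (0:ℝ) 1, g r * Real.sin (c * r) := by
    exact setIntegral_mono_set (aux_integrable g hg hgn hm c)
      ((ae_restrict_iff' measurableSet_Ioo).2 (ae_of_all _ fun r hr => hnonnegI r hr))
      (HasSubset.Subset.eventuallyLE hIoosub)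
  linarith

theorem stmt7 (ωhat : ℝ → ℝ)
    (hmeas : Measurable ωhat)
    (hnonneg : ∀ r ∈ Ioc (0:ℝ) 1, 0 ≤ ωhat r)
    (hmono : AntitoneOn (fun r => r ^ 2 * ωhat r) (Ioo 0 1))
    (hnonconst : ¬ ∃ c : ℝ, ∀ r ∈ Ioo (0:ℝ) 1, r ^ 2 * ωhat r = c)
    (hint : IntegrableOn (fun r => r ^ 3 * ωhat r) (Ioo 0 1)) :
    ∀ a : ℝ, 0 < a →
      0 < ∫ φ in Ioo 0 (π / 2),
        Real.sin (2 * φ) *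
          ∫ r in Ioo (0:ℝ) 1, r ^ 2 * ωhat r * Real.sin (r * Real.cos φ * a) := by
  intro a ha
  have hπ := Real.pi_pos
  set f : ℝ → ℝ := fun φ => Real.sin (2 * φ) *
    ∫ r in Ioo (0:ℝ) 1, r ^ 2 * ωhat r * Real.sin (r * Real.cos φ * a) with hfdef
  show 0 < ∫ φ in Ioo 0 (π / 2), f φ
  have hgmeas : Measurable (fun r : ℝ => r ^ 2 * ωhat r) :=
    (measurable_id.pow_const 2).mul hmeas
  have hgn : ∀ r ∈ Ioo (0:ℝ) 1, 0 ≤ r ^ 2 * ωhat r := fun r hr =>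
    mul_nonneg (by positivity) (hnonneg r ⟨hr.1, hr.2.le⟩)
  have hm : IntegrableOn (fun r : ℝ => r * (r ^ 2 * ωhat r)) (Ioo 0 1) := by
    have h1 : (fun r : ℝ => r * (r ^ 2 * ωhat r)) = fun r : ℝ => r ^ 3 * ωhat r := by
      funext r; ring
    rw [h1]; exact hint
  have hInner_eq : ∀ φ : ℝ,
      (∫ r in Ioo (0:ℝ) 1, r ^ 2 * ωhat r * Real.sin (r * Real.cos φ * a)) =
      ∫ r in Ioo (0:ℝ) 1, r ^ 2 * ωhat r * Real.sin (Real.cos φ * a * r) := by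
    intro φ
    refine integral_congr_ae (ae_of_all _ fun r => ?_)
    have h2 : r * Real.cos φ * a = Real.cos φ * a * r := by ring
    simp only [h2]
  have hInner_nonneg : ∀ φ ∈ Ioo (0:ℝ) (π / 2),
      0 ≤ ∫ r in Ioo (0:ℝ) 1, r ^ 2 * ωhat r * Real.sin (r * Real.cos φ * a) := by
    intro φ hφ
    rw [hInner_eq φ]
    have hcpos : 0 < Real.cos φ := Real.cos_pos_of_mem_Ioo ⟨by linarith [hφ.1], hφ.2⟩
    exact sineA _ hgmeas hgn hmono hm (mul_pos hcpos ha)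
  have hf_nonneg : ∀ φ ∈ Ioo (0:ℝ) (π / 2), 0 ≤ f φ := fun φ hφ =>
    mul_nonneg (Real.sin_nonneg_of_nonneg_of_le_pi (by linarith [hφ.1]) (by linarith [hφ.2]))
      (hInner_nonneg φ hφ)
  have hcont : Continuous f := by
    refine Continuous.mul (by fun_prop) ?_
    refine continuous_of_dominated
      (F := fun (φ : ℝ) (r : ℝ) => r ^ 2 * ωhat r * Real.sin (r * Real.cos φ * a))
      (bound := fun r : ℝ => a * |r ^ 3 * ωhat r|) ?_ ?_ ?_ ?_
    · intro φ
      exact (hgmeas.mul (Real.measurable_sin.comp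
        ((measurable_id.mul_const (Real.cos φ)).mul_const a))).aestronglyMeasurable
    · intro φ
      rw [ae_restrict_iff' measurableSet_Ioo]
      filter_upwards with r hr
      have h1 : |Real.sin (r * Real.cos φ * a)| ≤ r * a := by
        calc |Real.sin (r * Real.cos φ * a)| ≤ |r * Real.cos φ * a| := Real.abs_sin_le_abs
          _ = r * |Real.cos φ| * a := by
              rw [abs_mul, abs_mul, abs_of_nonneg hr.1.le, abs_of_nonneg ha.le]
          _ ≤ r * 1 * a := by
              have h5 : r * |Real.cos φ| ≤ r * 1 :=
                mul_le_mul_of_nonneg_left (Real.abs_cos_le_one φ) hr.1.le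
              exact mul_le_mul_of_nonneg_right h5 ha.le
          _ = r * a := by ring
      have h2 : |r ^ 3 * ωhat r| = r * |r ^ 2 * ωhat r| := by
        rw [show r ^ 3 * ωhat r = r * (r ^ 2 * ωhat r) by ring, abs_mul,
          abs_of_nonneg hr.1.le]
      calc ‖r ^ 2 * ωhat r * Real.sin (r * Real.cos φ * a)‖
          = |r ^ 2 * ωhat r| * |Real.sin (r * Real.cos φ * a)| := by
            rw [Real.norm_eq_abs, abs_mul]
        _ ≤ |r ^ 2 * ωhat r| * (r * a) := by
            exact mul_le_mul_of_nonneg_left h1 (abs_nonneg _)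
        _ = a * (r * |r ^ 2 * ωhat r|) := by ring
        _ = a * |r ^ 3 * ωhat r| := by rw [h2]
    · exact hint.abs.const_mul a
    · refine ae_of_all _ fun r => ?_
      fun_prop
  have hf_int : IntegrableOn f (Ioo 0 (π / 2)) :=
    (hcont.continuousOn.integrableOn_compact isCompact_Icc).mono_set Ioo_subset_Icc_self
  set u : ℝ := min (π / (2 * a)) (1 / 2) with hu
  have hu0 : 0 < u := lt_min (by positivity) (by norm_num)
  have hu1 : u ≤ 1 / 2 := min_le_right _ _
  set θ := Real.arccos u with hθdef
  have hθ1 : θ < π / 2 := Real.arccos_lt_pi_div_two.2 hu0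
  have hθ0 : 0 < θ := Real.arccos_pos.2 (by linarith)
  have hcosθ : Real.cos θ = u := Real.cos_arccos (by linarith) (by linarith)
  have hkey : ∀ φ ∈ Ioo θ (π / 2), 0 < f φ := by
    intro φ hφ
    have hc1 : Real.cos φ < u := by
      rw [← hcosθ]
      exact Real.cos_lt_cos_of_nonneg_of_le_pi hθ0.le (by linarith [hφ.2]) hφ.1
    have hcpos : 0 < Real.cos φ := Real.cos_pos_of_mem_Ioo ⟨by linarith [hθ0, hφ.1], hφ.2⟩
    have hcle : Real.cos φ * a ≤ π := by
      have h3 : Real.cos φ * a < u * a := mul_lt_mul_of_pos_right hc1 ha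
      have h4 : u * a ≤ π / 2 := by
        calc u * a ≤ π / (2 * a) * a := mul_le_mul_of_nonneg_right (min_le_left _ _) ha.le
          _ = π / 2 := by field_simp
      linarith
    refine mul_pos (Real.sin_pos_of_pos_of_lt_pi (by linarith [hθ0, hφ.1]) (by linarith [hφ.2])) ?_
    rw [hInner_eq φ]
    exact sineB _ hgmeas hgn hmono hnonconst hm (mul_pos hcpos ha) hcle
  have hmono_int : ∫ φ in Ioo θ (π / 2), f φ ≤ ∫ φ in Ioo 0 (π / 2), f φ :=
    setIntegral_mono_set hf_int
      ((ae_restrict_iff' measurableSet_Ioo).2 (ae_of_all _ fun φ hφ => hf_nonneg φ hφ))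
      (HasSubset.Subset.eventuallyLE (Ioo_subset_Ioo hθ0.le le_rfl))
  have hpos : 0 < ∫ φ in Ioo θ (π / 2), f φ := by
    rw [setIntegral_pos_iff_support_of_nonneg_ae
      ((ae_restrict_iff' measurableSet_Ioo).2 (ae_of_all _ fun φ hφ =>
        hf_nonneg φ ⟨lt_trans hθ0 hφ.1, hφ.2⟩))
      (hf_int.mono_set (Ioo_subset_Ioo hθ0.le le_rfl))]
    have hsub : Ioo θ (π / 2) ⊆ Function.support f ∩ Ioo θ (π / 2) := fun φ hφ =>
      ⟨(hkey φ hφ).ne', hφ⟩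
    calc (0 : ENNReal) < volume (Ioo θ (π / 2)) := by
          rw [Real.volume_Ioo]
          exact ENNReal.ofReal_pos.2 (by linarith)
      _ ≤ volume (Function.support f ∩ Ioo θ (π / 2)) := measure_mono hsub
  linarith
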